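/- arXiv:1805.07970 — 2 statements merged into one kernel-verified Lean document; each statement's English description precedes it below -/
import Mathlib

section
/- Let f : ℝ^d → ℝ^d be globally Lipschitz with constant L > 0, β > 0, 0 < h < 1/(Lβ), η > 0, v ∈ ℝ^d. Then the function x ↦ exp(-(1/(2η²))‖f(v) - f(v+x) + x/(βh)‖²) is integrable on ℝ^d and its integral K satisfies (√(2π)·η·βh/(1+Lβh))^d ≤ K ≤ (√(2π)·η·βh/(1-Lβh))^d; in particular 0 < K < ∞. -/
open MeasureTheory Real

lemma gauss_integrable' {b : ℝ} (hb : 0 < b) (d : ℕ) :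
    Integrable (fun x : EuclideanSpace ℝ (Fin d) => rexp (-b * ‖x‖ ^ 2)) := by
  have h1 := (GaussianFourier.integrable_cexp_neg_mul_sq_norm_add (V := EuclideanSpace ℝ (Fin d))
    (b := (b : ℂ)) (by simpa using hb) 0 (0 : EuclideanSpace ℝ (Fin d))).norm
  convert h1 using 2 with x
  rw [Complex.norm_exp]
  simp only [mul_zero, zero_mul, add_zero, Complex.neg_re, Complex.mul_re, Complex.ofReal_re,
    Complex.ofReal_im, zero_mul, sub_zero, ← Complex.ofReal_pow]

lemma gauss_integral' {b : ℝ} (hb : 0 < b) (d : ℕ) :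
    ∫ x : EuclideanSpace ℝ (Fin d), rexp (-b * ‖x‖ ^ 2) = Real.sqrt (π / b) ^ d := by
  rw [GaussianFourier.integral_rexp_neg_mul_sq_norm hb, finrank_euclideanSpace_fin]
  rw [Real.sqrt_eq_rpow, ← Real.rpow_natCast ((π / b) ^ ((1:ℝ)/2)) d,
    ← Real.rpow_mul (by positivity)]
  congr 1
  ring

theorem stmt3 (d : ℕ) (f : EuclideanSpace ℝ (Fin d) → EuclideanSpace ℝ (Fin d))
    (L β h η : ℝ) (hL : 0 < L) (hβ : 0 < β)
    (hlip : ∀ a b, ‖f a - f b‖ ≤ L * ‖a - b‖)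
    (hh : 0 < h) (hh2 : h < 1 / (L * β)) (hη : 0 < η)
    (hmeas : Measurable f) (v : EuclideanSpace ℝ (Fin d)) :
    Integrable (fun x : EuclideanSpace ℝ (Fin d) =>
      Real.exp (-(1 / (2 * η ^ 2)) * ‖f v - f (v + x) + (1 / (β * h)) • x‖ ^ 2)) ∧
    (Real.sqrt (2 * π) * η * β * h / (1 + L * β * h)) ^ d ≤
      (∫ x : EuclideanSpace ℝ (Fin d),
        Real.exp (-(1 / (2 * η ^ 2)) * ‖f v - f (v + x) + (1 / (β * h)) • x‖ ^ 2)) ∧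
    (∫ x : EuclideanSpace ℝ (Fin d),
        Real.exp (-(1 / (2 * η ^ 2)) * ‖f v - f (v + x) + (1 / (β * h)) • x‖ ^ 2)) ≤
      (Real.sqrt (2 * π) * η * β * h / (1 - L * β * h)) ^ d ∧
    0 < (∫ x : EuclideanSpace ℝ (Fin d),
        Real.exp (-(1 / (2 * η ^ 2)) * ‖f v - f (v + x) + (1 / (β * h)) • x‖ ^ 2)) := by
  have hLβh : L * β * h < 1 := by
    have := (lt_div_iff₀ (by positivity)).mp hh2
    linarith [this]
  have hβh : 0 < β * h := by positivity
  set c : ℝ := 1 / (2 * η ^ 2) with hc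
  have hcpos : 0 < c := by positivity
  set A : ℝ := (1 + L * β * h) / (β * h) with hA
  set B : ℝ := (1 - L * β * h) / (β * h) with hB
  have hApos : 0 < A := by
    apply div_pos (by positivity) hβh
  have hBpos : 0 < B := by
    apply div_pos (by linarith) hβh
  set g : EuclideanSpace ℝ (Fin d) → EuclideanSpace ℝ (Fin d) :=
    fun x => f v - f (v + x) + (1 / (β * h)) • x with hg
  -- norm bounds
  have hub : ∀ x, ‖g x‖ ≤ A * ‖x‖ := by
    intro x
    have h1 : ‖f v - f (v + x)‖ ≤ L * ‖x‖ := by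
      have := hlip v (v + x)
      simpa using this
    have h2 : ‖(1 / (β * h)) • x‖ = (1 / (β * h)) * ‖x‖ := by
      rw [norm_smul, Real.norm_eq_abs, abs_of_pos (by positivity)]
    calc ‖g x‖ ≤ ‖f v - f (v + x)‖ + ‖(1 / (β * h)) • x‖ := norm_add_le _ _
      _ ≤ L * ‖x‖ + (1 / (β * h)) * ‖x‖ := by rw [h2]; linarith
      _ = A * ‖x‖ := by rw [hA]; field_simp; ring
  have hlb : ∀ x, B * ‖x‖ ≤ ‖g x‖ := by
    intro x
    have h1 : ‖f v - f (v + x)‖ ≤ L * ‖x‖ := by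
      have := hlip v (v + x)
      simpa using this
    have h2 : ‖(1 / (β * h)) • x‖ = (1 / (β * h)) * ‖x‖ := by
      rw [norm_smul, Real.norm_eq_abs, abs_of_pos (by positivity)]
    have h3 : ‖(1 / (β * h)) • x‖ - ‖f v - f (v + x)‖ ≤ ‖g x‖ := by
      have := norm_sub_norm_le ((1 / (β * h)) • x) (-(f v - f (v + x)))
      simp only [norm_neg] at this
      calc ‖(1 / (β * h)) • x‖ - ‖f v - f (v + x)‖
          ≤ ‖(1 / (β * h)) • x - -(f v - f (v + x))‖ := this
        _ = ‖g x‖ := by rw [hg]; congr 1; abel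
    calc B * ‖x‖ = (1 / (β * h)) * ‖x‖ - L * ‖x‖ := by rw [hB]; field_simp
      _ ≤ ‖(1 / (β * h)) • x‖ - ‖f v - f (v + x)‖ := by rw [h2]; linarith
      _ ≤ ‖g x‖ := h3
  -- pointwise exp bounds
  have hexpub : ∀ x, rexp (-c * ‖g x‖ ^ 2) ≤ rexp (-(c * B ^ 2) * ‖x‖ ^ 2) := by
    intro x
    apply Real.exp_le_exp.mpr
    have h2 : (B * ‖x‖) ^ 2 ≤ ‖g x‖ ^ 2 := by
      apply sq_le_sq' _ (hlb x)
      have : 0 ≤ B * ‖x‖ := by positivity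
      linarith [norm_nonneg (g x)]
    nlinarith [h2, hcpos]
  have hexplb : ∀ x, rexp (-(c * A ^ 2) * ‖x‖ ^ 2) ≤ rexp (-c * ‖g x‖ ^ 2) := by
    intro x
    apply Real.exp_le_exp.mpr
    have h2 : ‖g x‖ ^ 2 ≤ (A * ‖x‖) ^ 2 := by
      apply sq_le_sq' _ (hub x)
      have := norm_nonneg (g x)
      have : 0 ≤ A * ‖x‖ := by positivity
      linarith [norm_nonneg (g x)]
    nlinarith [h2, hcpos]
  -- measurability
  have hgmeas : Measurable g := by
    apply Measurable.add
    · exact (measurable_const.sub (hmeas.comp (measurable_const.add measurable_id)))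
    · exact measurable_const_smul (1 / (β * h))
  have hmeas2 : Measurable (fun x : EuclideanSpace ℝ (Fin d) => rexp (-c * ‖g x‖ ^ 2)) := by
    have : Measurable fun x : EuclideanSpace ℝ (Fin d) => -c * ‖g x‖ ^ 2 :=
      (hgmeas.norm.pow_const 2).const_mul (-c)
    exact this.exp
  -- integrability
  have hint : Integrable (fun x : EuclideanSpace ℝ (Fin d) => rexp (-c * ‖g x‖ ^ 2)) := by
    apply Integrable.mono' (gauss_integrable' (mul_pos hcpos (pow_pos hBpos 2)) d)
      hmeas2.aestronglyMeasurable
    filter_upwards with x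
    rw [Real.norm_eq_abs, abs_of_pos (Real.exp_pos _)]
    exact hexpub x
  -- Gaussian integral values
  have hsqrtA : Real.sqrt (π / (c * A ^ 2)) = Real.sqrt (2 * π) * η * β * h / (1 + L * β * h) := by
    have key : Real.sqrt (2 * π) ^ 2 = 2 * π := Real.sq_sqrt (by positivity)
    have h1 : π / (c * A ^ 2) = (Real.sqrt (2 * π) * η * β * h / (1 + L * β * h)) ^ 2 := by
      rw [hc, hA]
      rw [div_pow, div_pow, mul_pow, mul_pow, mul_pow, mul_pow, key]
      have hne : (1 : ℝ) + L * β * h ≠ 0 := by positivity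
      field_simp
    rw [h1, Real.sqrt_sq (by positivity)]
  have hsqrtB : Real.sqrt (π / (c * B ^ 2)) = Real.sqrt (2 * π) * η * β * h / (1 - L * β * h) := by
    have key : Real.sqrt (2 * π) ^ 2 = 2 * π := Real.sq_sqrt (by positivity)
    have h1 : π / (c * B ^ 2) = (Real.sqrt (2 * π) * η * β * h / (1 - L * β * h)) ^ 2 := by
      rw [hc, hB]
      rw [div_pow, div_pow, mul_pow, mul_pow, mul_pow, mul_pow, key]
      have hne : (1 : ℝ) - L * β * h ≠ 0 := by linarith
      field_simp
    rw [h1, Real.sqrt_sq (le_of_lt (div_pos (by positivity) (by linarith)))]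
  have hIA : ∫ x : EuclideanSpace ℝ (Fin d), rexp (-(c * A ^ 2) * ‖x‖ ^ 2)
      = (Real.sqrt (2 * π) * η * β * h / (1 + L * β * h)) ^ d := by
    rw [gauss_integral' (by positivity) d, hsqrtA]
  have hIB : ∫ x : EuclideanSpace ℝ (Fin d), rexp (-(c * B ^ 2) * ‖x‖ ^ 2)
      = (Real.sqrt (2 * π) * η * β * h / (1 - L * β * h)) ^ d := by
    rw [gauss_integral' (mul_pos hcpos (pow_pos hBpos 2)) d, hsqrtB]
  refine ⟨hint, ?_, ?_, ?_⟩
  · rw [← hIA]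
    exact integral_mono (gauss_integrable' (by positivity) d) hint hexplb
  · rw [← hIB]
    exact integral_mono hint (gauss_integrable' (mul_pos hcpos (pow_pos hBpos 2)) d) hexpub
  · calc (0 : ℝ) < (Real.sqrt (2 * π) * η * β * h / (1 + L * β * h)) ^ d := by positivity
      _ ≤ _ := by
          rw [← hIA]
          exact integral_mono (gauss_integrable' (by positivity) d) hint hexplb
end

section
/- Let f : ℝ → ℝ be globally Lipschitz with constant L, let 0 < h < 1/L, and let Z_i ∈ ℝ. Then the function z ↦ exp(-(1/(2η²))((z - Z_i)/h - f(z))²) is integrable over ℝ for any η > 0, and its integral lies in the interval [√(2π)·η·h/(1+Lh), √(2π)·η·h/(1-Lh)]. -/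
open MeasureTheory Real Filter

theorem stmt10 (f : ℝ → ℝ) (L h η Zi : ℝ) (hL : 0 < L)
    (hlip : ∀ a b, |f a - f b| ≤ L * |a - b|) (hmeas : Measurable f)
    (hh : 0 < h) (hh2 : h < 1 / L) (hη : 0 < η) :
    Integrable (fun z => Real.exp (-(1 / (2 * η ^ 2)) * ((z - Zi) / h - f z) ^ 2)) ∧
    (∫ z : ℝ, Real.exp (-(1 / (2 * η ^ 2)) * ((z - Zi) / h - f z) ^ 2)) ∈
      Set.Icc (Real.sqrt (2 * π) * η * h / (1 + L * h))
        (Real.sqrt (2 * π) * η * h / (1 - L * h)) := by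
  have hLh : L * h < 1 := by
    have := (lt_div_iff₀ hL).mp hh2
    linarith
  set c : ℝ := 1 / (2 * η ^ 2) with hc
  have hcpos : 0 < c := by positivity
  set a₁ : ℝ := 1 / h - L with ha₁
  set a₂ : ℝ := 1 / h + L with ha₂
  have ha₁pos : 0 < a₁ := by
    rw [ha₁, sub_pos]
    exact (lt_div_iff₀ hh).mpr (by linarith)
  have ha₂pos : 0 < a₂ := by positivity
  set g : ℝ → ℝ := fun z => (z - Zi) / h - f z with hg
  have hfc : Continuous f := by
    have : LipschitzWith (Real.toNNReal L) f :=
      LipschitzWith.of_dist_le_mul fun a b => by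
        simpa [Real.dist_eq, Real.coe_toNNReal L hL.le] using hlip a b
    exact this.continuous
  have hgc : Continuous g :=
    ((continuous_id.sub continuous_const).div_const h).sub hfc
  -- linear lower/upper comparison for g
  have hlow : ∀ z : ℝ, 0 ≤ z → a₁ * z + g 0 ≤ g z := by
    intro z hz
    have h1 : f z - f 0 ≤ L * z := by
      have := hlip z 0
      have h2 : |z - 0| = z := by rw [sub_zero, abs_of_nonneg hz]
      rw [h2] at this
      exact (abs_le.mp this).2
    simp only [hg, ha₁]
    have e : (z - Zi) / h - (0 - Zi) / h = (1 / h) * z := by field_simp; ring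
    linarith [e, h1]
  have hup : ∀ z : ℝ, z ≤ 0 → g z ≤ a₁ * z + g 0 := by
    intro z hz
    have h1 : L * z ≤ f z - f 0 := by
      have := hlip z 0
      have h2 : |z - 0| = -z := by rw [sub_zero, abs_of_nonpos hz]
      rw [h2] at this
      have := (abs_le.mp this).1
      linarith
    simp only [hg, ha₁]
    have e : (z - Zi) / h - (0 - Zi) / h = (1 / h) * z := by field_simp; ring
    linarith [e, h1]
  have hgtop : Tendsto g atTop atTop := by
    apply tendsto_atTop_mono' atTop (f₁ := fun z => a₁ * z + g 0)
    · filter_upwards [eventually_ge_atTop (0:ℝ)] with z hz using hlow z hz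
    · exact tendsto_atTop_add_const_right _ _ (tendsto_id.const_mul_atTop ha₁pos)
  have hgbot : Tendsto g atBot atBot := by
    apply tendsto_atBot_mono' atBot (f₁ := fun z => a₁ * z + g 0)
    · filter_upwards [eventually_le_atBot (0:ℝ)] with z hz using hup z hz
    · exact tendsto_atBot_add_const_right _ _ (tendsto_id.const_mul_atBot ha₁pos)
  obtain ⟨z₀, hz₀⟩ := (hgc.surjective hgtop hgbot) 0
  -- key two-sided bound on |g z|
  have hkey : ∀ z : ℝ, a₁ * |z - z₀| ≤ |g z| ∧ |g z| ≤ a₂ * |z - z₀| := by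
    intro z
    have hrepr : g z = (z - z₀) / h - (f z - f z₀) := by
      have : g z = g z - g z₀ := by rw [hz₀, sub_zero]
      rw [this]; simp only [hg]; ring
    have habs : |(z - z₀) / h| = |z - z₀| / h := by
      rw [abs_div, abs_of_pos hh]
    constructor
    · calc a₁ * |z - z₀| = |z - z₀| / h - L * |z - z₀| := by rw [ha₁]; ring
        _ ≤ |(z - z₀) / h| - |f z - f z₀| := by
            rw [habs]; linarith [hlip z z₀]
        _ ≤ |(z - z₀) / h - (f z - f z₀)| := abs_sub_abs_le_abs_sub _ _
        _ = |g z| := by rw [hrepr]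
    · calc |g z| = |(z - z₀) / h - (f z - f z₀)| := by rw [hrepr]
        _ ≤ |(z - z₀) / h| + |f z - f z₀| := abs_sub _ _
        _ ≤ |z - z₀| / h + L * |z - z₀| := by rw [habs]; linarith [hlip z z₀]
        _ = a₂ * |z - z₀| := by rw [ha₂]; ring
  have hsq₁ : ∀ z : ℝ, -(c * (g z) ^ 2) ≤ -(c * a₁ ^ 2 * (z - z₀) ^ 2) := by
    intro z
    have h1 := (hkey z).1
    have h2 : (a₁ * |z - z₀|) ^ 2 ≤ (g z) ^ 2 := by
      rw [← sq_abs (g z)]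
      exact pow_le_pow_left₀ (by positivity) h1 2
    rw [mul_pow, sq_abs] at h2
    nlinarith [hcpos]
  have hsq₂ : ∀ z : ℝ, -(c * a₂ ^ 2 * (z - z₀) ^ 2) ≤ -(c * (g z) ^ 2) := by
    intro z
    have h1 := (hkey z).2
    have h2 : (g z) ^ 2 ≤ (a₂ * |z - z₀|) ^ 2 := by
      rw [← sq_abs (g z)]
      exact pow_le_pow_left₀ (abs_nonneg _) h1 2
    rw [mul_pow, sq_abs] at h2
    nlinarith [hcpos]
  -- measurability
  have hgm : Measurable g := ((measurable_id.sub_const Zi).div_const h).sub hmeas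
  have hm : Measurable (fun z => Real.exp (-(c * (g z) ^ 2))) :=
    Real.measurable_exp.comp (((hgm.pow_const 2).const_mul c).neg)
  -- integrable Gaussians
  have hG₁ : Integrable (fun z : ℝ => Real.exp (-(c * a₁ ^ 2) * (z - z₀) ^ 2)) :=
    (integrable_exp_neg_mul_sq (by positivity : (0:ℝ) < c * a₁ ^ 2)).comp_sub_right z₀
  have hG₂ : Integrable (fun z : ℝ => Real.exp (-(c * a₂ ^ 2) * (z - z₀) ^ 2)) :=
    (integrable_exp_neg_mul_sq (by positivity : (0:ℝ) < c * a₂ ^ 2)).comp_sub_right z₀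
  have hInt : Integrable (fun z => Real.exp (-(c * (g z) ^ 2))) := by
    refine hG₁.mono hm.aestronglyMeasurable ?_
    filter_upwards with z
    rw [Real.norm_eq_abs, Real.norm_eq_abs, abs_of_pos (Real.exp_pos _),
      abs_of_pos (Real.exp_pos _)]
    exact Real.exp_le_exp.mpr (by have := hsq₁ z; linarith)
  -- Gaussian integral values
  have hval : ∀ a : ℝ, 0 < a →
      (∫ z : ℝ, Real.exp (-(c * a ^ 2) * (z - z₀) ^ 2)) = Real.sqrt (2 * π) * η / a := by
    intro a ha
    calc (∫ z : ℝ, Real.exp (-(c * a ^ 2) * (z - z₀) ^ 2))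
        = ∫ z : ℝ, Real.exp (-(c * a ^ 2) * z ^ 2) :=
          integral_sub_right_eq_self (fun z => Real.exp (-(c * a ^ 2) * z ^ 2)) z₀
      _ = Real.sqrt (π / (c * a ^ 2)) := integral_gaussian _
      _ = Real.sqrt (2 * π) * η / a := by
          have h1 : π / (c * a ^ 2) = (Real.sqrt (2 * π) * η / a) ^ 2 := by
            rw [div_pow, mul_pow, sq_sqrt (by positivity : (0:ℝ) ≤ 2 * π), hc]
            field_simp
          rw [h1, Real.sqrt_sq (by positivity)]
  have hI₁ : (∫ z : ℝ, Real.exp (-(c * a₁ ^ 2) * (z - z₀) ^ 2))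
      = Real.sqrt (2 * π) * η * h / (1 - L * h) := by
    rw [hval a₁ ha₁pos]
    have e : a₁ = (1 - L * h) / h := by rw [ha₁]; field_simp
    rw [e, div_div_eq_mul_div]
  have hI₂ : (∫ z : ℝ, Real.exp (-(c * a₂ ^ 2) * (z - z₀) ^ 2))
      = Real.sqrt (2 * π) * η * h / (1 + L * h) := by
    rw [hval a₂ ha₂pos]
    have e : a₂ = (1 + L * h) / h := by rw [ha₂]; field_simp
    rw [e, div_div_eq_mul_div]
  -- conclude
  have hrew : (fun z => Real.exp (-(1 / (2 * η ^ 2)) * ((z - Zi) / h - f z) ^ 2))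
      = fun z => Real.exp (-(c * (g z) ^ 2)) := by
    funext z; rw [hg, hc]; ring_nf
  rw [hrew]
  refine ⟨hInt, ?_, ?_⟩
  · rw [← hI₂]
    exact integral_mono hG₂ hInt fun z => Real.exp_le_exp.mpr (by have := hsq₂ z; linarith)
  · rw [← hI₁]
    exact integral_mono hInt hG₁ fun z => Real.exp_le_exp.mpr (by have := hsq₁ z; linarith)
end
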